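/- A graph on n vertices has at most 3^{n/3} maximal cliques (Moon–Moser bound); hence a finite set X of n elements with dissimilarity d has at most 3^{n/3} maximal diameter-homogeneous subsets under any threshold D. -/

import Mathlib

open Finset

lemma mm_nat_le_rpow (k : ℕ) (hk : 1 ≤ k) : (k : ℝ) ≤ (3:ℝ) ^ ((k : ℝ) / 3) := by
  induction k with
  | zero => omega
  | succ n ih =>
    have key : ∀ x : ℝ, 0 ≤ x → x ^ (3:ℕ) ≤ 3 → x ≤ (3:ℝ) ^ ((1:ℝ)/3) := by
      intro x hx h
      have := Real.rpow_le_rpow (x := x ^ (3:ℕ)) (by positivity) h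
        (le_of_lt (by norm_num : (0:ℝ) < 1/3))
      rwa [← Real.rpow_natCast x 3, ← Real.rpow_mul hx,
        show ((3:ℕ):ℝ) * (1/3) = 1 by norm_num, Real.rpow_one] at this
    have cast1 : ((n+1 : ℕ) : ℝ) = (n:ℝ) + 1 := by push_cast; ring
    rcases Nat.lt_or_ge n 3 with h3 | h3
    · interval_cases n
      · simpa using Real.one_le_rpow (by norm_num : (1:ℝ) ≤ 3) (by norm_num)
      · have := Real.rpow_le_rpow (x := (2:ℝ)^(3:ℕ)) (by positivity)
          (show (2:ℝ)^(3:ℕ) ≤ (3:ℝ)^(2:ℕ) by norm_num)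
          (le_of_lt (by norm_num : (0:ℝ) < 1/3))
        rw [← Real.rpow_natCast (2:ℝ) 3, ← Real.rpow_natCast (3:ℝ) 2,
          ← Real.rpow_mul (by norm_num), ← Real.rpow_mul (by norm_num)] at this
        norm_num at this
        convert this using 2 <;> norm_num
      · norm_num [show ((3:ℕ):ℝ)/3 = 1 by norm_num]
    · have ih' := ih (by omega)
      have hc : (4/3 : ℝ) ≤ (3:ℝ) ^ ((1:ℝ)/3) := key _ (by norm_num) (by norm_num)
      have hn3 : (3:ℝ) ≤ (n:ℝ) := by exact_mod_cast h3
      have h1 : ((n:ℝ)+1) ≤ (n:ℝ) * (3:ℝ) ^ ((1:ℝ)/3) := by nlinarith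
      rw [cast1]
      calc ((n:ℝ)+1) ≤ (n:ℝ) * (3:ℝ) ^ ((1:ℝ)/3) := h1
        _ ≤ (3:ℝ) ^ ((n:ℝ)/3) * (3:ℝ) ^ ((1:ℝ)/3) :=
            mul_le_mul_of_nonneg_right ih' (by positivity)
        _ = (3:ℝ) ^ (((n:ℝ)+1)/3) := by
            rw [← Real.rpow_add (by norm_num)]; ring_nf

universe u

open Finset SimpleGraph in
lemma mm_main : ∀ (n : ℕ) (V : Type u) [Fintype V] [DecidableEq V], Fintype.card V ≤ n →
    ∀ G : SimpleGraph V,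
    (({A : Finset V | G.IsClique (A : Set V) ∧
        ∀ B : Finset V, G.IsClique (B : Set V) → A ⊆ B → A = B}.ncard : ℝ)) ≤
      (3 : ℝ) ^ ((Fintype.card V : ℝ) / 3) := by
  intro n
  induction n with
  | zero =>
    intro V _ _ hcard G
    classical
    have hV : Fintype.card V = 0 := Nat.le_zero.mp hcard
    have : {A : Finset V | G.IsClique (A : Set V) ∧
        ∀ B : Finset V, G.IsClique (B : Set V) → A ⊆ B → A = B} = {∅} := by
      ext A
      simp only [Set.mem_setOf_eq, Set.mem_singleton_iff]
      constructor
      · rintro ⟨-, -⟩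
        exact Finset.eq_empty_of_forall_notMem fun x _ =>
          (Fintype.card_eq_zero_iff.mp hV).false x
      · rintro rfl
        refine ⟨by simp, fun B _ _ => ?_⟩
        exact (Finset.eq_empty_of_forall_notMem fun x _ =>
          (Fintype.card_eq_zero_iff.mp hV).false x).symm
    rw [this, Set.ncard_singleton, hV]
    simpa using Real.one_le_rpow (by norm_num : (1:ℝ) ≤ 3) (by norm_num)
  | succ n IH =>
    intro V _ _ hcard G
    classical
    rcases Nat.lt_or_ge (Fintype.card V) (n+1) with hlt | hge
    · exact IH V (by omega) G
    have hcV : Fintype.card V = n + 1 := le_antisymm hcard hge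
    have hne : Nonempty V := Fintype.card_pos_iff.mp (by omega)
    set S : Set (Finset V) := {A : Finset V | G.IsClique (A : Set V) ∧
        ∀ B : Finset V, G.IsClique (B : Set V) → A ⊆ B → A = B} with hSdef
    set M : V → Finset V := fun u => Finset.univ.filter (fun w => ¬ G.Adj u w) with hMdef
    have hMmem : ∀ u, u ∈ M u := fun u => by simp [hMdef]
    have hMcard_le : ∀ u, (M u).card ≤ Fintype.card V := fun u => Finset.card_le_univ _
    -- choose v minimizing |M v|
    obtain ⟨v, -, hvmin⟩ := Finset.exists_min_image Finset.univ (fun u => (M u).card)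
      ⟨hne.some, Finset.mem_univ _⟩
    have hvmin' : ∀ u, (M v).card ≤ (M u).card := fun u => hvmin u (Finset.mem_univ u)
    have hm1 : 1 ≤ (M v).card := Finset.card_pos.mpr ⟨v, hMmem v⟩
    -- every maximal clique meets M v
    have hhit : ∀ A ∈ S, ∃ u ∈ M v, u ∈ A := by
      intro A hA
      by_contra hcon
      push_neg at hcon
      have hadj : ∀ a ∈ A, a ≠ v → G.Adj v a := by
        intro a ha hav
        by_contra hnadj
        exact hcon a (by simp only [hMdef, Finset.mem_filter]; exact ⟨Finset.mem_univ a, hnadj⟩) ha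
      have hclique : G.IsClique ((insert v A : Finset V) : Set V) := by
        rw [Finset.coe_insert]
        exact hA.1.insert (fun b hb hbv => hadj b hb (fun h => hbv h.symm))
      have := hA.2 _ hclique (Finset.subset_insert v A)
      have hvA : v ∈ A := this ▸ Finset.mem_insert_self v A
      exact hcon v (hMmem v) hvA
    -- the per-vertex injection into maximal cliques of the induced neighborhood
    have hper : ∀ u : V, ({A ∈ S | u ∈ A}.ncard : ℝ) ≤
        (3 : ℝ) ^ (((Fintype.card V - (M u).card : ℕ) : ℝ) / 3) := by
      intro u
      set su : Set V := {w | G.Adj u w} with hsu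
      have hcard_su : Fintype.card su = Fintype.card V - (M u).card := by
        have h1 : Fintype.card su = (Finset.univ.filter (fun w => G.Adj u w)).card := by
          simp [hsu, Fintype.card_subtype]
        have h2 := Finset.card_filter_add_card_filter_not
          (s := (Finset.univ : Finset V)) (p := fun w => G.Adj u w)
        simp only [Finset.card_univ] at h2
        simp only [hMdef]
        omega
      set Gu : SimpleGraph su := G.induce su with hGu
      set Su : Set (Finset su) := {A : Finset su | Gu.IsClique (A : Set su) ∧
          ∀ B : Finset su, Gu.IsClique (B : Set su) → A ⊆ B → A = B} with hSu
      set f : Finset V → Finset su := fun A => A.subtype (fun w => w ∈ su) with hf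
      have hrecon : ∀ A, A ∈ S → u ∈ A →
          A = insert u ((f A).map (Function.Embedding.subtype _)) := by
        intro A hA hu
        rw [hf, Finset.subtype_map]
        ext a
        simp only [Finset.mem_insert, Finset.mem_filter]
        constructor
        · intro ha
          by_cases hau : a = u
          · exact Or.inl hau
          · exact Or.inr ⟨ha, hA.1 hu ha (fun h => hau h.symm)⟩
        · rintro (rfl | ⟨ha, -⟩) <;> [exact hu; exact ha]
      have hmaps : ∀ A ∈ {A ∈ S | u ∈ A}, f A ∈ Su := by
        rintro A ⟨hA, huA⟩
        constructor
        · intro x hx y hy hxy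
          have hx' : (x : V) ∈ A := by
            rw [Finset.mem_coe, hf, Finset.mem_subtype] at hx; exact hx
          have hy' : (y : V) ∈ A := by
            rw [Finset.mem_coe, hf, Finset.mem_subtype] at hy; exact hy
          have : G.Adj x y := hA.1 hx' hy' (fun h => hxy (Subtype.ext h))
          simpa [hGu] using this
        · intro B' hB' hsub
          set B : Finset V := insert u (B'.map (Function.Embedding.subtype _)) with hB
          have hBclique : G.IsClique (B : Set V) := by
            rw [hB, Finset.coe_insert]
            refine IsClique.insert ?_ ?_
            · intro a ha b hb hab
              rw [Finset.mem_coe, Finset.mem_map] at ha hb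
              obtain ⟨x, hx, rfl⟩ := ha
              obtain ⟨y, hy, rfl⟩ := hb
              have : Gu.Adj x y := hB' hx hy (fun h => hab (congrArg _ h))
              simpa [hGu] using this
            · intro b hb hub
              rw [Finset.mem_coe, Finset.mem_map] at hb
              obtain ⟨x, hx, rfl⟩ := hb
              exact x.2
          have hAB : A ⊆ B := by
            intro a ha
            by_cases hau : a = u
            · exact hau ▸ Finset.mem_insert_self u _
            · have hadj : a ∈ su := hA.1 huA ha (fun h => hau h.symm)
              have : (⟨a, hadj⟩ : su) ∈ f A := by
                rw [hf, Finset.mem_subtype]; exact ha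
              refine Finset.mem_insert_of_mem ?_
              rw [Finset.mem_map]
              exact ⟨⟨a, hadj⟩, hsub this, rfl⟩
          have hAeqB : A = B := hA.2 B hBclique hAB
          refine le_antisymm hsub ?_
          intro x hx
          have hxA : (x : V) ∈ A := by
            rw [hAeqB, hB]
            refine Finset.mem_insert_of_mem ?_
            rw [Finset.mem_map]
            exact ⟨x, hx, rfl⟩
          rw [hf, Finset.mem_subtype]
          exact hxA
      have hinj : Set.InjOn f {A ∈ S | u ∈ A} := by
        rintro A ⟨hA, huA⟩ B ⟨hB, huB⟩ hfAB
        rw [hrecon A hA huA, hrecon B hB huB, hfAB]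
      have hcount : ({A ∈ S | u ∈ A}.ncard : ℝ) ≤ (Su.ncard : ℝ) := by
        exact_mod_cast Nat.cast_le.mpr
          (Set.ncard_le_ncard_of_injOn f hmaps hinj (Set.toFinite Su))
      have hIH := IH su (by
        rw [hcard_su]
        have := hMmem u
        have : 1 ≤ (M u).card := Finset.card_pos.mpr ⟨u, hMmem u⟩
        omega) Gu
      rw [hcard_su] at hIH
      exact hcount.trans hIH
    -- now combine
    set m := (M v).card with hm
    have hmV : m ≤ Fintype.card V := hMcard_le v
    have hSfin : S.Finite := Set.toFinite S
    have hTfin : ∀ u : V, ({A ∈ S | u ∈ A}).Finite := fun u => Set.toFinite _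
    have h1 : S.ncard ≤ ∑ u ∈ M v, {A ∈ S | u ∈ A}.ncard := by
      rw [Set.ncard_eq_toFinset_card S hSfin]
      calc hSfin.toFinset.card ≤ ((M v).biUnion (fun u => (hTfin u).toFinset)).card := by
            apply Finset.card_le_card
            intro A hA
            rw [Set.Finite.mem_toFinset] at hA
            obtain ⟨u, hu, huA⟩ := hhit A hA
            rw [Finset.mem_biUnion]
            exact ⟨u, hu, (hTfin u).mem_toFinset.mpr ⟨hA, huA⟩⟩
        _ ≤ ∑ u ∈ M v, (hTfin u).toFinset.card := Finset.card_biUnion_le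
        _ = ∑ u ∈ M v, {A ∈ S | u ∈ A}.ncard := by
            refine Finset.sum_congr rfl fun u _ => ?_
            rw [Set.ncard_eq_toFinset_card _ (hTfin u)]
    have hsplit : (S.ncard : ℝ) ≤ ∑ u ∈ M v, ({A ∈ S | u ∈ A}.ncard : ℝ) := by
      calc (S.ncard:ℝ) ≤ ((∑ u ∈ M v, {A ∈ S | u ∈ A}.ncard : ℕ) : ℝ) := Nat.cast_le.mpr h1
        _ = ∑ u ∈ M v, ({A ∈ S | u ∈ A}.ncard : ℝ) := by push_cast; rfl
    have hstep2 : ∑ u ∈ M v, ({A ∈ S | u ∈ A}.ncard : ℝ)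
        ≤ ∑ u ∈ M v, (3:ℝ) ^ (((Fintype.card V - m : ℕ) : ℝ) / 3) := by
      refine Finset.sum_le_sum fun u hu => (hper u).trans ?_
      apply Real.rpow_le_rpow_of_exponent_le (by norm_num)
      have hle : Fintype.card V - (M u).card ≤ Fintype.card V - m := by
        have := hvmin' u; omega
      have := (Nat.cast_le (α := ℝ)).mpr hle
      linarith
    rw [Finset.sum_const, nsmul_eq_mul] at hstep2
    calc (S.ncard : ℝ) ≤ (m:ℝ) * (3:ℝ) ^ (((Fintype.card V - m : ℕ) : ℝ) / 3) :=
          hsplit.trans hstep2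
      _ ≤ (3:ℝ)^((m:ℝ)/3) * (3:ℝ) ^ (((Fintype.card V - m : ℕ) : ℝ) / 3) :=
          mul_le_mul_of_nonneg_right (mm_nat_le_rpow m hm1) (by positivity)
      _ = (3:ℝ) ^ ((Fintype.card V : ℝ)/3) := by
          rw [← Real.rpow_add (by norm_num)]
          congr 1
          rw [Nat.cast_sub hmV]
          ring

/-- Moon–Moser bound: a graph on `n` vertices has at most `3^(n/3)` maximal
cliques; hence a finite set with a dissimilarity has at most `3^(n/3)` maximal
diameter-homogeneous subsets under any threshold `D`. -/
theorem moon_moser_maximal_cliques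
    {V : Type*} [Fintype V] [DecidableEq V] :
    (∀ G : SimpleGraph V,
      ({A : Finset V | G.IsClique (A : Set V) ∧
          ∀ B : Finset V, G.IsClique (B : Set V) → A ⊆ B → A = B}.ncard : ℝ) ≤
        (3 : ℝ) ^ ((Fintype.card V : ℝ) / 3)) ∧
    ∀ (d : V → V → ℝ) (D : ℝ),
      (∀ a, d a a = 0) → (∀ a b, d a b = d b a) → (∀ a b, 0 ≤ d a b) →
      ({A : Finset V | (∀ a ∈ A, ∀ b ∈ A, d a b ≤ D) ∧
          ∀ B : Finset V, (∀ a ∈ B, ∀ b ∈ B, d a b ≤ D) → A ⊆ B → A = B}.ncard : ℝ) ≤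
        (3 : ℝ) ^ ((Fintype.card V : ℝ) / 3) := by
  have part1 : ∀ G : SimpleGraph V,
      ({A : Finset V | G.IsClique (A : Set V) ∧
          ∀ B : Finset V, G.IsClique (B : Set V) → A ⊆ B → A = B}.ncard : ℝ) ≤
        (3 : ℝ) ^ ((Fintype.card V : ℝ) / 3) :=
    fun G => mm_main (Fintype.card V) V le_rfl G
  refine ⟨part1, ?_⟩
  intro d D h0 hsymm hnonneg
  by_cases hD : 0 ≤ D
  · let G : SimpleGraph V :=
      { Adj := fun a b => a ≠ b ∧ d a b ≤ D
        symm := by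
          constructor
          rintro a b ⟨hne, hle⟩
          exact ⟨hne.symm, by rw [hsymm b a]; exact hle⟩
        loopless := by constructor; rintro a ⟨hne, -⟩; exact hne rfl }
    have hiff : ∀ A : Finset V, (∀ a ∈ A, ∀ b ∈ A, d a b ≤ D) ↔ G.IsClique (A : Set V) := by
      intro A
      constructor
      · intro h a ha b hb hab
        exact ⟨hab, h a ha b hb⟩
      · intro h a ha b hb
        by_cases hab : a = b
        · rw [hab, h0]; exact hD
        · exact (h ha hb hab).2
    have hset : {A : Finset V | (∀ a ∈ A, ∀ b ∈ A, d a b ≤ D) ∧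
          ∀ B : Finset V, (∀ a ∈ B, ∀ b ∈ B, d a b ≤ D) → A ⊆ B → A = B} =
        {A : Finset V | G.IsClique (A : Set V) ∧
          ∀ B : Finset V, G.IsClique (B : Set V) → A ⊆ B → A = B} := by
      ext A
      simp only [Set.mem_setOf_eq, hiff]
    rw [hset]
    exact part1 G
  · push_neg at hD
    have hempty : ∀ A : Finset V, (∀ a ∈ A, ∀ b ∈ A, d a b ≤ D) → A = ∅ := by
      intro A hA
      by_contra hne
      obtain ⟨a, ha⟩ := Finset.nonempty_of_ne_empty hne
      have := hA a ha a ha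
      rw [h0] at this
      linarith
    have hset : {A : Finset V | (∀ a ∈ A, ∀ b ∈ A, d a b ≤ D) ∧
          ∀ B : Finset V, (∀ a ∈ B, ∀ b ∈ B, d a b ≤ D) → A ⊆ B → A = B} = {∅} := by
      ext A
      simp only [Set.mem_setOf_eq, Set.mem_singleton_iff]
      constructor
      · rintro ⟨hA, -⟩; exact hempty A hA
      · rintro rfl
        exact ⟨by simp, fun B hB _ => (hempty B hB).symm⟩
    rw [hset, Set.ncard_singleton]
    simpa using Real.one_le_rpow (by norm_num : (1:ℝ) ≤ 3) (by positivity)
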